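/- arXiv:1010.0328 — 7 statements merged into one kernel-verified Lean document; each statement's English description precedes it below -/
import Mathlib

section
/- Suppose A, B, C, D are real matrices (A of size n₁×m₁, B of size n₂×m₂, C of size n₁×m₁, D of size n₂×m₂) such that AᵀA, BᵀB, CᵀC, DᵀD are all diagonal matrices, and at least one of AᵀC = 0 or BᵀD = 0 holds. Then for any real γ, the matrix L = A ⊗ B + γ·C ⊗ D has orthogonal columns, i.e., LᵀL is diagonal. -/
open Matrix Kronecker

theorem kronecker_sum_orthogonal_columns (n₁ m₁ n₂ m₂ : ℕ) (γ : ℝ)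
    (A : Matrix (Fin n₁) (Fin m₁) ℝ) (B : Matrix (Fin n₂) (Fin m₂) ℝ)
    (C : Matrix (Fin n₁) (Fin m₁) ℝ) (D : Matrix (Fin n₂) (Fin m₂) ℝ)
    (hA : (Aᵀ * A).IsDiag) (hB : (Bᵀ * B).IsDiag)
    (hC : (Cᵀ * C).IsDiag) (hD : (Dᵀ * D).IsDiag)
    (hAC : Aᵀ * C = 0 ∨ Bᵀ * D = 0) :
    ((A ⊗ₖ B + γ • (C ⊗ₖ D))ᵀ * (A ⊗ₖ B + γ • (C ⊗ₖ D))).IsDiag := by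
  have hcross : (Aᵀ * C) ⊗ₖ (Bᵀ * D) = 0 := by
    rcases hAC with h | h <;> rw [h] <;> simp [Matrix.zero_kronecker, Matrix.kronecker_zero]
  have hcross' : (Cᵀ * A) ⊗ₖ (Dᵀ * B) = 0 := by
    have := congrArg Matrix.transpose hcross
    rwa [← Matrix.kroneckerMap_transpose, Matrix.transpose_mul, Matrix.transpose_mul,
      Matrix.transpose_transpose, Matrix.transpose_transpose, Matrix.transpose_zero] at this
  rw [Matrix.transpose_add, Matrix.transpose_smul, ← Matrix.kroneckerMap_transpose,
    ← Matrix.kroneckerMap_transpose, Matrix.add_mul, Matrix.mul_add, Matrix.mul_add, Matrix.smul_mul,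
    Matrix.smul_mul, Matrix.mul_smul, Matrix.mul_smul, ← Matrix.mul_kronecker_mul,
    ← Matrix.mul_kronecker_mul, ← Matrix.mul_kronecker_mul, ← Matrix.mul_kronecker_mul,
    hcross, hcross', smul_smul]
  simp only [smul_zero, add_zero, zero_add]
  exact (hA.kronecker hB).add ((hC.kronecker hD).smul _)
end

section
/- Let n ≥ 4 with n ≡ 2 (mod 4). Then there do not exist two functions a, b from Fin n to ℤ, each a bijection onto the set {±1, ±3, …, ±(n−1)} (i.e., the odd integers of absolute value less than n), such that ∑_{i} a(i)·b(i) = 0. -/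
private def sgn4 (x : ℤ) : ℤ := if x % 4 = 1 then 1 else -1

private lemma sgn4_cases (x : ℤ) : sgn4 x = 1 ∨ sgn4 x = -1 := by
  unfold sgn4; split <;> simp

private lemma odd_mod4 {x : ℤ} (hx : Odd x) : x % 4 = 1 ∨ x % 4 = 3 := by
  obtain ⟨k, hk⟩ := hx; omega

private lemma sgn4_dvd {x : ℤ} (hx : Odd x) : (4 : ℤ) ∣ x - sgn4 x := by
  unfold sgn4
  rcases odd_mod4 hx with h | h <;> simp [h] <;> omega

private lemma sgn4_mul {x y : ℤ} (hx : Odd x) (hy : Odd y) :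
    sgn4 (x * y) = sgn4 x * sgn4 y := by
  have h : (x * y) % 4 = (x % 4) * (y % 4) % 4 := Int.mul_emod x y 4
  unfold sgn4
  rcases odd_mod4 hx with h1 | h1 <;> rcases odd_mod4 hy with h2 | h2 <;>
    rw [h1, h2] at h <;> norm_num at h <;> simp [h1, h2, h]

private lemma sgn4_sq (x : ℤ) : sgn4 x * sgn4 x = 1 := by
  rcases sgn4_cases x with h | h <;> simp [h]

theorem no_orthogonal_LH_pair (n : ℕ) (hn : 4 ≤ n) (hmod : n % 4 = 2) :
    ¬ ∃ a b : Fin n → ℤ,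
      Set.BijOn a Set.univ {x : ℤ | Odd x ∧ |x| < (n : ℤ)} ∧
      Set.BijOn b Set.univ {x : ℤ | Odd x ∧ |x| < (n : ℤ)} ∧
      ∑ i : Fin n, a i * b i = 0 := by
  rintro ⟨a, b, ha, hb, hsum⟩
  set S : Set ℤ := {x : ℤ | Odd x ∧ |x| < (n : ℤ)} with hS
  have haodd : ∀ i, Odd (a i) := fun i => (ha.mapsTo (Set.mem_univ i)).1
  have hbodd : ∀ i, Odd (b i) := fun i => (hb.mapsTo (Set.mem_univ i)).1
  -- the ±1 terms
  set u : Fin n → ℤ := fun i => sgn4 (a i) * sgn4 (b i) with hu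
  have hucases : ∀ i, u i = 1 ∨ u i = -1 := by
    intro i
    rcases sgn4_cases (a i) with h1 | h1 <;> rcases sgn4_cases (b i) with h2 | h2 <;>
      simp [hu, h1, h2]
  -- the total sum is congruent to ∑ u mod 4
  have hdvd : (4 : ℤ) ∣ (∑ i : Fin n, a i * b i) - ∑ i : Fin n, u i := by
    rw [← Finset.sum_sub_distrib]
    apply Finset.dvd_sum
    intro i _
    have := sgn4_dvd (Odd.mul (haodd i) (hbodd i))
    rwa [sgn4_mul (haodd i) (hbodd i)] at this
  -- images of a and b agree as finsets
  have himg : Finset.image a Finset.univ = Finset.image b Finset.univ := by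
    apply Finset.coe_injective
    rw [Finset.coe_image, Finset.coe_image, Finset.coe_univ, ha.image_eq, hb.image_eq]
  -- product of all u is 1
  have hprodsplit : (∏ i : Fin n, u i) = (∏ i : Fin n, sgn4 (a i)) * ∏ i : Fin n, sgn4 (b i) := by
    rw [hu, Finset.prod_mul_distrib]
  have hprodeq : (∏ i : Fin n, sgn4 (a i)) = ∏ i : Fin n, sgn4 (b i) := by
    rw [← Finset.prod_image (fun x _ y _ h => ha.injOn (Set.mem_univ x) (Set.mem_univ y) h),
        ← Finset.prod_image (fun x _ y _ h => hb.injOn (Set.mem_univ x) (Set.mem_univ y) h),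
        himg]
  have hprod : (∏ i : Fin n, u i) = 1 := by
    rw [hprodsplit, ← hprodeq, ← Finset.prod_mul_distrib]
    exact Finset.prod_eq_one fun i _ => sgn4_sq (a i)
  -- count of -1 terms
  set t : ℕ := (Finset.univ.filter (fun i => u i = -1)).card with ht
  have hcard : (Finset.univ.filter (fun i => ¬ u i = -1)).card + t = n := by
    rw [ht, add_comm, Finset.card_filter_add_card_filter_not, Finset.card_univ,
      Fintype.card_fin]
  have e1 : (∑ i ∈ Finset.univ.filter (fun i => u i = -1), u i) = -(t : ℤ) := by
    have : (∑ i ∈ Finset.univ.filter (fun i => u i = -1), u i)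
        = ∑ _i ∈ Finset.univ.filter (fun i => u i = -1), (-1 : ℤ) :=
      Finset.sum_congr rfl (fun i hi => (Finset.mem_filter.mp hi).2)
    rw [this, Finset.sum_const, ht]; simp
  have e2 : (∑ i ∈ Finset.univ.filter (fun i => ¬ u i = -1), u i)
      = ((Finset.univ.filter (fun i => ¬ u i = -1)).card : ℤ) := by
    have : (∑ i ∈ Finset.univ.filter (fun i => ¬ u i = -1), u i)
        = ∑ _i ∈ Finset.univ.filter (fun i => ¬ u i = -1), (1 : ℤ) :=
      Finset.sum_congr rfl (fun i hi => by
        rcases hucases i with h | h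
        · exact h
        · exact absurd h (Finset.mem_filter.mp hi).2)
    rw [this, Finset.sum_const]; simp
  have hsumu : (∑ i : Fin n, u i) =
      ((Finset.univ.filter (fun i => ¬ u i = -1)).card : ℤ) - (t : ℤ) := by
    rw [← Finset.sum_filter_add_sum_filter_not Finset.univ (fun i => u i = -1), e1, e2]
    ring
  have p1 : (∏ i ∈ Finset.univ.filter (fun i => u i = -1), u i) = (-1 : ℤ) ^ t := by
    have : (∏ i ∈ Finset.univ.filter (fun i => u i = -1), u i)
        = ∏ _i ∈ Finset.univ.filter (fun i => u i = -1), (-1 : ℤ) :=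
      Finset.prod_congr rfl (fun i hi => (Finset.mem_filter.mp hi).2)
    rw [this, Finset.prod_const, ht]
  have p2 : (∏ i ∈ Finset.univ.filter (fun i => ¬ u i = -1), u i) = 1 := by
    have : (∏ i ∈ Finset.univ.filter (fun i => ¬ u i = -1), u i)
        = ∏ _i ∈ Finset.univ.filter (fun i => ¬ u i = -1), (1 : ℤ) :=
      Finset.prod_congr rfl (fun i hi => by
        rcases hucases i with h | h
        · exact h
        · exact absurd h (Finset.mem_filter.mp hi).2)
    rw [this, Finset.prod_const, one_pow]
  have hprodt : (∏ i : Fin n, u i) = (-1 : ℤ) ^ t := by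
    rw [← Finset.prod_filter_mul_prod_filter_not Finset.univ (fun i => u i = -1), p1, p2,
      mul_one]
  have hteven : Even t := by
    by_contra hodd
    rw [hprodt, (Nat.not_even_iff_odd.mp hodd).neg_one_pow] at hprod
    norm_num at hprod
  -- conclude by arithmetic
  rw [hsum, hsumu] at hdvd
  obtain ⟨s, hs⟩ := hteven
  omega
end

section
/- If n ≡ 2 (mod 4), then for any permutation b of the set S = {±1, ±3, …, ±(n−1)} ⊂ ℤ and the specific enumeration a with a(i) = 2i−1 and a(i+n/2) = −(2i−1) for i = 1,…,n/2, the sum ∑_{i=1}^{n} a(i)·b(i) is an odd multiple of 2, hence nonzero. In particular ∑ a(i)b(i) ≠ 0. -/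
theorem parity_sum_odd_multiple_of_two (n : ℕ) (hmod : n % 4 = 2)
    (a : Fin n → ℤ)
    (ha : ∀ i : Fin n, a i = if (i : ℕ) < n / 2 then 2 * (i : ℤ) + 1
            else -(2 * ((i : ℤ) - n / 2) + 1))
    (b : Fin n → ℤ)
    (hb : Set.BijOn b Set.univ {x : ℤ | Odd x ∧ |x| < (n : ℤ)}) :
    (∃ k : ℤ, Odd k ∧ ∑ i : Fin n, a i * b i = 2 * k) ∧
      ∑ i : Fin n, a i * b i ≠ 0 := by
  classical
  have hm : n = 2 * (n / 2) := by omega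
  have hmz : ((n : ℤ)) = 2 * ((n : ℤ) / 2) := by
    have h2 : (2 : ℤ) ∣ (n : ℤ) := ⟨(n / 2 : ℕ), by exact_mod_cast hm⟩
    omega
  -- every a i is odd
  have haodd : ∀ i : Fin n, Odd (a i) := by
    intro i
    rw [ha i]
    split
    · exact ⟨(i : ℤ), by ring⟩
    · exact ⟨-((i : ℤ) - (n : ℤ) / 2) - 1, by ring⟩
  -- every b i is odd
  have hbodd : ∀ i : Fin n, Odd (b i) :=
    fun i => (hb.mapsTo (Set.mem_univ i)).1
  -- sum of a is zero
  have hsa : ∑ i : Fin n, a i = 0 := by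
    have h1 : ∑ i : Fin n, a i =
        ∑ i ∈ Finset.range n, (if i < n / 2 then 2 * (i : ℤ) + 1
          else -(2 * ((i : ℤ) - (n : ℤ) / 2) + 1)) := by
      rw [← Fin.sum_univ_eq_sum_range]
      exact Finset.sum_congr rfl fun i _ => ha i
    rw [h1, Finset.range_eq_Ico,
      ← Finset.sum_Ico_consecutive _ (Nat.zero_le (n / 2)) (by omega : n / 2 ≤ n)]
    have h2 : ∑ i ∈ Finset.Ico 0 (n / 2), (if i < n / 2 then 2 * (i : ℤ) + 1
        else -(2 * ((i : ℤ) - (n : ℤ) / 2) + 1)) = ∑ i ∈ Finset.range (n / 2), (2 * (i : ℤ) + 1) := by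
      rw [← Finset.range_eq_Ico]
      refine Finset.sum_congr rfl fun i hi => ?_
      rw [if_pos (Finset.mem_range.mp hi)]
    have h3 : ∑ i ∈ Finset.Ico (n / 2) n, (if i < n / 2 then 2 * (i : ℤ) + 1
        else -(2 * ((i : ℤ) - (n : ℤ) / 2) + 1))
        = ∑ i ∈ Finset.range (n / 2), (-(2 * (i : ℤ) + 1)) := by
      have hn : n = n / 2 + n / 2 := by omega
      rw [show Finset.Ico (n / 2) n = Finset.Ico (n / 2) (n / 2 + n / 2) by rw [← hn]]
      rw [Finset.sum_Ico_eq_sum_range]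
      simp only [Nat.add_sub_cancel_left]
      refine Finset.sum_congr rfl fun i hi => ?_
      rw [if_neg (by omega)]
      have : ((n / 2 + i : ℕ) : ℤ) = (n : ℤ) / 2 + (i : ℤ) := by
        push_cast
        omega
      rw [this]
      ring
    rw [h2, h3, ← Finset.sum_add_distrib]
    exact Finset.sum_eq_zero fun x _ => by ring
  -- sum of b is zero
  have hsb : ∑ i : Fin n, b i = 0 := by
    set T : Finset ℤ := (Finset.Ioo (-(n : ℤ)) (n : ℤ)).filter (fun x => Odd x) with hT
    have hmemT : ∀ x : ℤ, x ∈ T ↔ Odd x ∧ |x| < (n : ℤ) := by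
      intro x
      simp [hT, Finset.mem_filter, Finset.mem_Ioo, abs_lt, and_comm]
    have hbij : ∑ i : Fin n, b i = ∑ x ∈ T, x := by
      refine Finset.sum_bij (fun i _ => b i) ?_ ?_ ?_ ?_
      · intro i _
        exact (hmemT (b i)).mpr (hb.mapsTo (Set.mem_univ i))
      · intro i _ j _ hij
        exact hb.injOn (Set.mem_univ i) (Set.mem_univ j) hij
      · intro x hx
        obtain ⟨i, _, hi⟩ := hb.surjOn ((hmemT x).mp hx)
        exact ⟨i, Finset.mem_univ i, hi⟩
      · intro i _
        rfl
    rw [hbij]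
    refine Finset.sum_involution (fun x _ => -x) ?_ ?_ ?_ ?_
    · intro x _; ring
    · intro x _ hfx h
      exact hfx (by omega)
    · intro x hx
      rcases (hmemT x).mp hx with ⟨h1, h2⟩
      exact (hmemT (-x)).mpr ⟨h1.neg, by rwa [abs_neg]⟩
    · intro x _; ring
  -- divisibility by 4
  have hdvd : (4 : ℤ) ∣ ∑ i : Fin n, (a i - 1) * (b i - 1) := by
    refine Finset.dvd_sum fun i _ => ?_
    obtain ⟨s, hs⟩ := haodd i
    obtain ⟨t, ht⟩ := hbodd i
    exact ⟨s * t, by rw [hs, ht]; ring⟩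
  have hexpand : ∑ i : Fin n, (a i - 1) * (b i - 1)
      = (∑ i : Fin n, a i * b i) - (∑ i : Fin n, a i) - (∑ i : Fin n, b i) + n := by
    have h : ∀ i : Fin n, (a i - 1) * (b i - 1) = a i * b i - a i - b i + 1 :=
      fun i => by ring
    simp_rw [h]
    rw [Finset.sum_add_distrib, Finset.sum_sub_distrib, Finset.sum_sub_distrib]
    simp
  rw [hexpand, hsa, hsb] at hdvd
  obtain ⟨c, hc⟩ := hdvd
  have hn4 : (n : ℤ) % 4 = 2 := by omega
  set S := ∑ i : Fin n, a i * b i with hS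
  have hSc : S = 4 * c - n := by linarith [hc]
  refine ⟨⟨2 * c - (n : ℤ) / 2, ⟨c - (n : ℤ) / 4 - 1, by omega⟩, by omega⟩, ?_⟩
  omega
end

section
/- Let n₁, n₂ be positive integers and n = n₁n₂. Let a : Fin n₁ → ℤ with a(i) ∈ {1, −1}, let b : Fin n₂ → ℤ be a bijection onto the set of n₂ integers centered at 0 with spacing 1 scaled by 2 (i.e., onto {−(n₂−1), −(n₂−3), …, n₂−3, n₂−1}), let c : Fin n₁ → ℤ be a bijection onto {−(n₁−1), −(n₁−3), …, n₁−1}, and let d : Fin n₂ → ℤ with d(j) ∈ {1, −1}. Assume that whenever c(p) = −c(p′), we have a(p) = a(p′). Then the map (i,j) ↦ a(i)·b(j) + n₂·c(i)·d(j) is a bijection from Fin n₁ × Fin n₂ onto the set {−(n−1), −(n−3), …, n−3, n−1}. -/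
/-- The set of `n` equally spaced levels `{-(n-1), -(n-3), …, n-3, n-1}` (levels scaled by 2). -/
def levelSet (n : ℕ) : Set ℤ :=
  {x : ℤ | |x| ≤ (n : ℤ) - 1 ∧ (2 : ℤ) ∣ (x + (n : ℤ) - 1)}

lemma levelSet_eq (n : ℕ) : levelSet n = (fun k : ℤ => 2*k - n + 1) '' (Set.Ico (0:ℤ) n) := by
  ext x
  simp only [levelSet, Set.mem_setOf_eq, Set.mem_image, Set.mem_Ico, abs_le]
  constructor
  · rintro ⟨⟨h1, h2⟩, m, hm⟩
    exact ⟨m, by omega, by omega⟩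
  · rintro ⟨k, ⟨h1, h2⟩, rfl⟩
    exact ⟨⟨by omega, by omega⟩, k, by omega⟩

lemma levelSet_finite (n : ℕ) : (levelSet n).Finite := by
  rw [levelSet_eq]; exact (Set.finite_Ico _ _).image _

lemma levelSet_ncard (n : ℕ) : (levelSet n).ncard = n := by
  rw [levelSet_eq, Set.ncard_image_of_injective _ (fun x y h => by omega)]
  rw [← Finset.coe_Ico, Set.ncard_coe_finset, Int.card_Ico]
  simp


theorem latin_hypercube_column_a (n₁ n₂ : ℕ) (hn₁ : 0 < n₁) (hn₂ : 0 < n₂)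
    (a : Fin n₁ → ℤ) (ha : ∀ i, a i = 1 ∨ a i = -1)
    (b : Fin n₂ → ℤ) (hb : Set.BijOn b Set.univ (levelSet n₂))
    (c : Fin n₁ → ℤ) (hc : Set.BijOn c Set.univ (levelSet n₁))
    (d : Fin n₂ → ℤ) (hd : ∀ j, d j = 1 ∨ d j = -1)
    (hac : ∀ p p' : Fin n₁, c p = -c p' → a p = a p') :
    Set.BijOn (fun ij : Fin n₁ × Fin n₂ => a ij.1 * b ij.2 + (n₂ : ℤ) * c ij.1 * d ij.2)
      Set.univ (levelSet (n₁ * n₂)) := by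
  have hn2 : (1:ℤ) ≤ (n₂:ℤ) := by exact_mod_cast hn₂
  have hn1 : (1:ℤ) ≤ (n₁:ℤ) := by exact_mod_cast hn₁
  have hmt : Set.MapsTo (fun ij : Fin n₁ × Fin n₂ =>
      a ij.1 * b ij.2 + (n₂ : ℤ) * c ij.1 * d ij.2) Set.univ (levelSet (n₁ * n₂)) := by
    rintro ⟨i, j⟩ -
    obtain ⟨hb1, hb2⟩ := hb.mapsTo (Set.mem_univ j)
    obtain ⟨hc1, hc2⟩ := hc.mapsTo (Set.mem_univ i)
    rw [abs_le] at hb1 hc1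
    have hK1 : -((n₁:ℤ)*n₂ - n₂) ≤ (n₂:ℤ) * c i := by nlinarith [hc1.1]
    have hK2 : (n₂:ℤ) * c i ≤ (n₁:ℤ)*n₂ - n₂ := by nlinarith [hc1.2]
    have hKd : (2:ℤ) ∣ (n₂:ℤ) * c i + (n₁:ℤ)*(n₂:ℤ) - n₂ := by
      obtain ⟨m, hm⟩ := hc2
      exact ⟨n₂ * m, by linear_combination (n₂:ℤ) * hm⟩
    simp only [levelSet, Set.mem_setOf_eq, abs_le]
    push_cast
    rcases ha i with h1|h1 <;> rcases hd j with h2|h2 <;>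
      simp only [h1, h2, mul_one, one_mul, mul_neg_one, neg_one_mul] <;>
      [skip; skip; skip; skip] <;>
    · generalize hgK : (n₂:ℤ) * c i = K at *
      generalize hgN : (n₁:ℤ) * (n₂:ℤ) = N at *
      omega
  have hinj : Set.InjOn (fun ij : Fin n₁ × Fin n₂ =>
      a ij.1 * b ij.2 + (n₂ : ℤ) * c ij.1 * d ij.2) Set.univ := by
    rintro ⟨p, q⟩ - ⟨p', q'⟩ - heq
    simp only at heq
    obtain ⟨hb1, hb2⟩ := hb.mapsTo (Set.mem_univ q)
    obtain ⟨hb1', hb2'⟩ := hb.mapsTo (Set.mem_univ q')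
    obtain ⟨hc1, hc2⟩ := hc.mapsTo (Set.mem_univ p)
    obtain ⟨hc1', hc2'⟩ := hc.mapsTo (Set.mem_univ p')
    rw [abs_le] at hb1 hb1' hc1 hc1'
    have hcd : c p * d q = c p' * d q' := by
      by_contra hne
      have hpar : (2:ℤ) ∣ (c p * d q - c p' * d q') := by
        rcases hd q with h1|h1 <;> rcases hd q' with h2|h2 <;> rw [h1, h2] <;>
          simp only [mul_one, mul_neg_one] <;> omega
      have habs : (n₂:ℤ) * (c p * d q - c p' * d q') = a p' * b q' - a p * b q := by
        linear_combination heq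
      have hEub : a p' * b q' - a p * b q ≤ 2*(n₂:ℤ) - 2 := by
        rcases ha p with h1|h1 <;> rcases ha p' with h2|h2 <;> rw [h1, h2] <;>
          simp only [one_mul, neg_one_mul] <;> linarith
      have hElb : -(2*(n₂:ℤ) - 2) ≤ a p' * b q' - a p * b q := by
        rcases ha p with h1|h1 <;> rcases ha p' with h2|h2 <;> rw [h1, h2] <;>
          simp only [one_mul, neg_one_mul] <;> linarith
      obtain ⟨t, ht⟩ := hpar
      have ht0 : t ≠ 0 := by rintro rfl; exact hne (by linarith)
      rw [ht] at habs
      rcases ht0.lt_or_gt with h|h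
      · nlinarith [mul_le_mul_of_nonneg_left (show t ≤ -1 by omega) (show (0:ℤ) ≤ n₂ by positivity)]
      · nlinarith [mul_le_mul_of_nonneg_left (show (1:ℤ) ≤ t by omega) (show (0:ℤ) ≤ n₂ by positivity)]
    have hab : a p * b q = a p' * b q' := by
      linear_combination heq - (n₂:ℤ) * hcd
    by_cases hpp : c p = c p'
    · have hp : p = p' := hc.injOn (Set.mem_univ p) (Set.mem_univ p') hpp
      subst hp
      have hbq : b q = b q' := by
        rcases ha p with h1|h1 <;> rw [h1] at hab <;> simp only [one_mul, neg_one_mul] at hab <;> linarith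
      have hq : q = q' := hb.injOn (Set.mem_univ q) (Set.mem_univ q') hbq
      subst hq; rfl
    · have hneg : c p = -c p' := by
        rcases hd q with h1|h1 <;> rcases hd q' with h2|h2 <;> rw [h1, h2] at hcd <;>
          simp only [mul_one, mul_neg_one] at hcd <;> omega
      have hcp' : c p' ≠ 0 := fun h => hpp (by omega)
      have hsum : c p' * (d q + d q') = 0 := by
        linear_combination (-1) * hcd + d q * hneg
      have hdq : d q' = -d q := by
        rcases mul_eq_zero.mp hsum with h|h
        · exact absurd h hcp'
        · linarith
      have hap : a p = a p' := hac p p' hneg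
      have hbq : b q = b q' := by
        rw [← hap] at hab
        rcases ha p with h1|h1 <;> rw [h1] at hab <;> simp only [one_mul, neg_one_mul] at hab <;> linarith
      have hq : q = q' := hb.injOn (Set.mem_univ q) (Set.mem_univ q') hbq
      subst hq
      rcases hd q with h|h <;> omega
  refine ⟨hmt, hinj, ?_⟩
  have hsub : (fun ij : Fin n₁ × Fin n₂ => a ij.1 * b ij.2 + (n₂ : ℤ) * c ij.1 * d ij.2) ''
      Set.univ ⊆ levelSet (n₁ * n₂) := Set.mapsTo_iff_image_subset.mp hmt
  have himg := Set.eq_of_subset_of_ncard_le hsub ?_ (levelSet_finite _)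
  · exact himg.symm.subset
  · rw [levelSet_ncard, Set.ncard_image_of_injOn hinj, Set.ncard_univ]
    simp
end

section
/- Let n₁, n₂ ≥ 1 and n = n₁n₂. With a, b, c, d as in the Latin-hypercube column construction, assume instead the alternative condition: whenever b(q) = −b(q′), one has d(q) = d(q′). Then (i,j) ↦ a(i)·b(j) + n₂·c(i)·d(j) is again a bijection from Fin n₁ × Fin n₂ onto {−(n−1), −(n−3), …, n−3, n−1}. -/
lemma neg_mem_levelSet {n : ℕ} {x : ℤ} (h : x ∈ levelSet n) : -x ∈ levelSet n := by
  obtain ⟨h1, h2⟩ := h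
  exact ⟨by simpa using h1, by omega⟩

lemma sign_mul_mem_levelSet {n : ℕ} {s x : ℤ} (hs : s = 1 ∨ s = -1) (h : x ∈ levelSet n) :
    s * x ∈ levelSet n := by
  rcases hs with rfl | rfl
  · simpa using h
  · simpa using neg_mem_levelSet h

lemma sum_mem_levelSet {n₁ n₂ : ℕ} {u v : ℤ} (hu : u ∈ levelSet n₂) (hv : v ∈ levelSet n₁) :
    u + (n₂ : ℤ) * v ∈ levelSet (n₁ * n₂) := by
  obtain ⟨hu1, k, hk⟩ := hu
  obtain ⟨hv1, l, hl⟩ := hv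
  have hn2 : (0 : ℤ) ≤ (n₂ : ℤ) - 1 := (abs_nonneg u).trans hu1
  rw [abs_le] at hu1 hv1
  constructor
  · rw [abs_le]
    push_cast
    constructor <;> nlinarith [hu1.1, hu1.2, hv1.1, hv1.2]
  · refine ⟨k + (n₂ : ℤ) * l, ?_⟩
    push_cast
    linear_combination hk + (n₂ : ℤ) * hl

lemma unique_decomp {n₁ n₂ : ℕ} {u u' v v' : ℤ}
    (hu : u ∈ levelSet n₂) (hu' : u' ∈ levelSet n₂)
    (hv : v ∈ levelSet n₁) (hv' : v' ∈ levelSet n₁)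
    (h : u + (n₂ : ℤ) * v = u' + (n₂ : ℤ) * v') : u = u' ∧ v = v' := by
  obtain ⟨hu1, hu2⟩ := hu
  obtain ⟨hu'1, hu'2⟩ := hu'
  obtain ⟨hv1, hv2⟩ := hv
  obtain ⟨hv'1, hv'2⟩ := hv'
  have hn2 : (1 : ℤ) ≤ (n₂ : ℤ) := by
    have := (abs_nonneg u).trans hu1; omega
  rw [abs_le] at hu1 hu'1 hv1 hv'1
  have hvv : v = v' := by
    by_contra hne
    have h2 : v - v' ≥ 2 ∨ v - v' ≤ -2 := by omega
    have heq : u - u' = (n₂ : ℤ) * (v' - v) := by linarith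
    rcases h2 with h2 | h2
    · nlinarith [hu1.1, hu1.2, hu'1.1, hu'1.2]
    · nlinarith [hu1.1, hu1.2, hu'1.1, hu'1.2]
  constructor
  · nlinarith [hvv]
  · exact hvv

theorem latin_hypercube_column_b (n₁ n₂ : ℕ) (hn₁ : 0 < n₁) (hn₂ : 0 < n₂)
    (a : Fin n₁ → ℤ) (ha : ∀ i, a i = 1 ∨ a i = -1)
    (b : Fin n₂ → ℤ) (hb : Set.BijOn b Set.univ (levelSet n₂))
    (c : Fin n₁ → ℤ) (hc : Set.BijOn c Set.univ (levelSet n₁))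
    (d : Fin n₂ → ℤ) (hd : ∀ j, d j = 1 ∨ d j = -1)
    (hbd : ∀ q q' : Fin n₂, b q = -b q' → d q = d q') :
    Set.BijOn (fun ij : Fin n₁ × Fin n₂ => a ij.1 * b ij.2 + (n₂ : ℤ) * c ij.1 * d ij.2)
      Set.univ (levelSet (n₁ * n₂)) := by
  have hbmem : ∀ j, b j ∈ levelSet n₂ := fun j => hb.1 (Set.mem_univ j)
  have hcmem : ∀ i, c i ∈ levelSet n₁ := fun i => hc.1 (Set.mem_univ i)
  have habmem : ∀ i j, a i * b j ∈ levelSet n₂ := fun i j =>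
    sign_mul_mem_levelSet (ha i) (hbmem j)
  have hcdmem : ∀ i j, c i * d j ∈ levelSet n₁ := fun i j => by
    rw [mul_comm]; exact sign_mul_mem_levelSet (hd j) (hcmem i)
  refine ⟨?_, ?_, ?_⟩
  · rintro ⟨i, j⟩ -
    have := sum_mem_levelSet (habmem i j) (hcdmem i j)
    simpa [mul_assoc] using this
  · rintro ⟨i, j⟩ - ⟨i', j'⟩ - h
    simp only [mul_assoc] at h
    obtain ⟨hab, hcd⟩ := unique_decomp (habmem i j) (habmem i' j') (hcdmem i j)
      (hcdmem i' j') h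
    have hane : a i ≠ 0 := by rcases ha i with h | h <;> simp [h]
    have hdne : ∀ q : Fin n₂, d q ≠ 0 := by
      intro q; rcases hd q with h | h <;> simp [h]
    have key : ∀ (hdj : d j = d j'), (i, j) = (i', j') := by
      intro hdj
      have hci : c i = c i' := by
        rw [hdj] at hcd
        exact mul_right_cancel₀ (hdne j') hcd
      have hii : i = i' := hc.2.1 (Set.mem_univ i) (Set.mem_univ i') hci
      subst hii
      have hbj : b j = b j' := by
        rcases ha i with h1 | h1 <;> rw [h1] at hab <;> [skip; skip] <;>
          first
          | (exact by linarith)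
          | (exact by linarith)
      have hjj : j = j' := hb.2.1 (Set.mem_univ j) (Set.mem_univ j') hbj
      rw [hjj]
    rcases ha i with h1 | h1 <;> rcases ha i' with h2 | h2
    · apply key
      have hbj : b j = b j' := by rw [h1, h2] at hab; linarith
      have : j = j' := hb.2.1 (Set.mem_univ j) (Set.mem_univ j') hbj
      rw [this]
    · -- a i = 1, a i' = -1 : b j = - b j'
      have hbj : b j = -b j' := by rw [h1, h2] at hab; linarith
      apply key
      exact hbd j j' hbj
    · have hbj : b j' = -b j := by rw [h1, h2] at hab; linarith
      apply key
      exact (hbd j' j hbj).symm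
    · apply key
      have hbj : b j = b j' := by rw [h1, h2] at hab; linarith
      have : j = j' := hb.2.1 (Set.mem_univ j) (Set.mem_univ j') hbj
      rw [this]
  · intro x hx
    obtain ⟨hx1, m, hm⟩ := hx
    push_cast at hm
    rw [abs_le] at hx1
    push_cast at hx1
    set q : ℤ := m / (n₂ : ℤ) with hq
    set r : ℤ := m % (n₂ : ℤ) with hr
    have hn2 : (0 : ℤ) < (n₂ : ℤ) := by exact_mod_cast hn₂
    have hm0 : 0 ≤ m := by nlinarith [hx1.1]
    have hmlt : m < (n₁ : ℤ) * n₂ := by nlinarith [hx1.2]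
    have hr0 : 0 ≤ r := Int.emod_nonneg m (by positivity)
    have hrlt : r < (n₂ : ℤ) := Int.emod_lt_of_pos m hn2
    have hq0 : 0 ≤ q := Int.ediv_nonneg hm0 (le_of_lt hn2)
    have hqlt : q < (n₁ : ℤ) := by
      rw [hq, Int.ediv_lt_iff_lt_mul hn2]
      exact hmlt
    have hdiv : (n₂ : ℤ) * q + r = m := Int.mul_ediv_add_emod m (n₂ : ℤ)
    set u : ℤ := 2 * r - (n₂ : ℤ) + 1 with hu
    set v : ℤ := 2 * q - (n₁ : ℤ) + 1 with hv
    have hum : u ∈ levelSet n₂ := ⟨by rw [abs_le]; omega, ⟨r, by omega⟩⟩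
    have hvm : v ∈ levelSet n₁ := ⟨by rw [abs_le]; omega, ⟨q, by omega⟩⟩
    have hsum : u + (n₂ : ℤ) * v = x := by
      rw [hu, hv]
      linear_combination 2 * hdiv - hm
    -- find j₁ with b j₁ = u
    obtain ⟨j₁, -, hj₁⟩ := hb.2.2 hum
    obtain ⟨j₂, -, hj₂⟩ := hb.2.2 (neg_mem_levelSet hum)
    have hd12 : d j₂ = d j₁ := hbd j₂ j₁ (by rw [hj₁, hj₂])
    have hvd : v * d j₁ ∈ levelSet n₁ := by
      rw [mul_comm]; exact sign_mul_mem_levelSet (hd j₁) hvm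
    obtain ⟨i, -, hi⟩ := hc.2.2 hvd
    have hdd : d j₁ * d j₁ = 1 := by rcases hd j₁ with h | h <;> rw [h] <;> norm_num
    rcases ha i with hai | hai
    · refine ⟨(i, j₁), Set.mem_univ _, ?_⟩
      simp only [hai, hj₁, hi, one_mul]
      linear_combination hsum + (n₂ : ℤ) * v * hdd
    · refine ⟨(i, j₂), Set.mem_univ _, ?_⟩
      simp only [hai, hj₂, hi, hd12]
      linear_combination hsum + (n₂ : ℤ) * v * hdd
end

section
/- Let A be an n₁×m₁ and D an n₂×m₂ real matrix, each with entries ±1 and with orthogonal columns (AᵀA = n₁·I, DᵀD = n₂·I). Let B be an n₂×m₂ and C an n₁×m₁ real matrix with orthogonal columns, and suppose AᵀC = 0 or BᵀD = 0. Then L = A ⊗ B + n₂·(C ⊗ D) satisfies LᵀL = n₁·I_{m₁} ⊗ (BᵀB) + n₂³·(CᵀC) ⊗ I_{m₂}; in particular LᵀL is diagonal, so all columns of L are mutually orthogonal. -/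
open Matrix Kronecker

theorem gram_of_kronecker_construction (n₁ m₁ n₂ m₂ : ℕ)
    (A : Matrix (Fin n₁) (Fin m₁) ℝ) (hA1 : ∀ i j, A i j = 1 ∨ A i j = -1)
    (hA : Aᵀ * A = (n₁ : ℝ) • (1 : Matrix (Fin m₁) (Fin m₁) ℝ))
    (D : Matrix (Fin n₂) (Fin m₂) ℝ) (hD1 : ∀ i j, D i j = 1 ∨ D i j = -1)
    (hD : Dᵀ * D = (n₂ : ℝ) • (1 : Matrix (Fin m₂) (Fin m₂) ℝ))
    (B : Matrix (Fin n₂) (Fin m₂) ℝ) (hB : (Bᵀ * B).IsDiag)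
    (C : Matrix (Fin n₁) (Fin m₁) ℝ) (hC : (Cᵀ * C).IsDiag)
    (horth : Aᵀ * C = 0 ∨ Bᵀ * D = 0)
    (L : Matrix (Fin n₁ × Fin n₂) (Fin m₁ × Fin m₂) ℝ)
    (hL : L = A ⊗ₖ B + (n₂ : ℝ) • (C ⊗ₖ D)) :
    Lᵀ * L = (n₁ : ℝ) • ((1 : Matrix (Fin m₁) (Fin m₁) ℝ) ⊗ₖ (Bᵀ * B))
        + ((n₂ : ℝ) ^ 3) • ((Cᵀ * C) ⊗ₖ (1 : Matrix (Fin m₂) (Fin m₂) ℝ))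
      ∧ (Lᵀ * L).IsDiag := by
  have hcross : (Aᵀ * C) ⊗ₖ (Bᵀ * D) = 0 := by
    rcases horth with h | h
    · rw [h, zero_kronecker]
    · rw [h, kronecker_zero]
  have hcross' : (Cᵀ * A) ⊗ₖ (Dᵀ * B) = 0 := by
    rcases horth with h | h
    · have : Cᵀ * A = 0 := by
        have := congrArg Matrix.transpose h
        simpa [Matrix.transpose_mul] using this
      rw [this, zero_kronecker]
    · have : Dᵀ * B = 0 := by
        have := congrArg Matrix.transpose h
        simpa [Matrix.transpose_mul] using this
      rw [this, kronecker_zero]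
  have key : Lᵀ * L = (n₁ : ℝ) • ((1 : Matrix (Fin m₁) (Fin m₁) ℝ) ⊗ₖ (Bᵀ * B))
        + ((n₂ : ℝ) ^ 3) • ((Cᵀ * C) ⊗ₖ (1 : Matrix (Fin m₂) (Fin m₂) ℝ)) := by
    subst hL
    rw [Matrix.transpose_add, Matrix.transpose_smul,
      ← kroneckerMap_transpose, ← kroneckerMap_transpose]
    simp only [Matrix.add_mul, Matrix.mul_add, Matrix.smul_mul, Matrix.mul_smul,
      ← Matrix.mul_kronecker_mul]
    rw [hcross, hcross', hA, hD]
    simp only [smul_zero, add_zero, zero_add, smul_kronecker, kronecker_smul, smul_smul]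
    rw [show (n₂:ℝ) * ((n₂:ℝ) * (n₂:ℝ)) = (n₂:ℝ)^3 by ring]
  refine ⟨key, ?_⟩
  rw [key]
  intro x y hxy
  simp only [Matrix.add_apply, Matrix.smul_apply, kroneckerMap_apply, Matrix.one_apply,
    smul_eq_mul]
  rcases ne_or_eq x.1 y.1 with h1 | h1
  · rw [if_neg h1, hC h1]
    simp
  · have h2 : x.2 ≠ y.2 := fun h => hxy (Prod.ext h1 h)
    rw [if_neg h2, hB h2]
    simp
end

section
/- With L constructed as in the Kronecker construction L = A ⊗ B + n₂·(C ⊗ D) satisfying the hypotheses of Proposition 4 (A, D orthogonal ±1 matrices; AᵀC = 0 or BᵀD = 0; B, C, L Latin hypercubes of n₂, n₁, n = n₁n₂ runs respectively), the maximum absolute column correlation satisfies ρ_M(L) = max{ w₃·ρ_M(B), w₄·ρ_M(C) } where w₃ = (n₂²−1)/(n²−1) and w₄ = n₂²(n₁²−1)/(n²−1). -/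
open Matrix Kronecker

/-- Column correlation `ρ_{jj'}(X)`. -/
noncomputable def rho {ι κ : Type*} [Fintype ι] (X : Matrix ι κ ℝ) (j j' : κ) : ℝ :=
  (∑ i, X i j * X i j') / Real.sqrt ((∑ i, X i j ^ 2) * (∑ i, X i j' ^ 2))

/-- Maximum absolute correlation `ρ_M(X) = max_{j ≠ j'} |ρ_{jj'}(X)|`. -/
noncomputable def rhoM {ι κ : Type*} [Fintype ι] (X : Matrix ι κ ℝ) : ℝ :=
  sSup {r : ℝ | ∃ j j' : κ, j ≠ j' ∧ r = |rho X j j'|}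

/-- The multiset of the `n` centered equally spaced Latin hypercube levels. -/
noncomputable def latinLevels (n : ℕ) : Multiset ℝ :=
  Finset.univ.val.map fun k : Fin n => (k : ℝ) - ((n : ℝ) - 1) / 2

/-- Each column of `X` is a permutation of the `n` Latin hypercube levels. -/
def IsLH {ι κ : Type*} [Fintype ι] (n : ℕ) (X : Matrix ι κ ℝ) : Prop :=
  ∀ j, (Finset.univ.val.map fun i => X i j) = latinLevels n

lemma sum_range_cast (n : ℕ) : ∑ k ∈ Finset.range n, (k:ℝ) = n*((n:ℝ)-1)/2 := by
  induction n with
  | zero => simp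
  | succ n ih => rw [Finset.sum_range_succ, ih]; push_cast; ring

lemma sum_range_sq_cast (n : ℕ) : ∑ k ∈ Finset.range n, (k:ℝ)^2 = n*((n:ℝ)-1)*(2*n-1)/6 := by
  induction n with
  | zero => simp
  | succ n ih => rw [Finset.sum_range_succ, ih]; push_cast; ring

lemma IsLH.sum_sq {ι κ : Type*} [Fintype ι] {n : ℕ} {X : Matrix ι κ ℝ}
    (hX : IsLH n X) (j : κ) :
    ∑ i, X i j ^ 2 = (n:ℝ) * ((n:ℝ)^2 - 1) / 12 := by
  have h1 : ∑ i, X i j ^ 2 = ((Finset.univ.val.map fun i => X i j).map (fun x => x^2)).sum := by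
    rw [Multiset.map_map]; rfl
  have h2 : (((latinLevels n).map (fun x => x^2))).sum
      = ∑ k : Fin n, ((k:ℝ) - ((n:ℝ)-1)/2)^2 := by
    rw [latinLevels, Multiset.map_map]; rfl
  rw [h1, hX j, h2]
  rw [show (∑ k : Fin n, ((k:ℝ) - ((n:ℝ)-1)/2)^2) = ∑ k ∈ Finset.range n, ((k:ℝ) - ((n:ℝ)-1)/2)^2
    from Fin.sum_univ_eq_sum_range (fun k => ((k:ℝ) - ((n:ℝ)-1)/2)^2) n]
  set c : ℝ := ((n:ℝ)-1)/2 with hc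
  have expand : ∀ k ∈ Finset.range n, ((k:ℝ) - c)^2 = (k:ℝ)^2 - 2*c*(k:ℝ) + c^2 := by
    intro k _; ring
  rw [Finset.sum_congr rfl expand]
  rw [Finset.sum_add_distrib, Finset.sum_sub_distrib, ← Finset.mul_sum,
    Finset.sum_const, Finset.card_range, sum_range_cast, sum_range_sq_cast, hc]
  ring

lemma rhoM_bddAbove {ι κ : Type*} [Fintype ι] [Fintype κ] (X : Matrix ι κ ℝ) :
    BddAbove {r : ℝ | ∃ j j' : κ, j ≠ j' ∧ r = |rho X j j'|} := by
  apply Set.Finite.bddAbove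
  apply Set.Finite.subset (Set.finite_range (fun p : κ × κ => |rho X p.1 p.2|))
  rintro r ⟨j, j', -, rfl⟩
  exact ⟨(j, j'), rfl⟩

lemma rhoM_eq_zero_of_isEmpty {ι κ : Type*} [Fintype ι] [IsEmpty ι] (X : Matrix ι κ ℝ)
    (h : ∃ j j' : κ, j ≠ j') : rhoM X = 0 := by
  have hset : {r : ℝ | ∃ j j' : κ, j ≠ j' ∧ r = |rho X j j'|} = {0} := by
    ext r
    constructor
    · rintro ⟨j, j', -, rfl⟩; simp [rho]
    · rintro rfl; obtain ⟨j, j', hj⟩ := h; exact ⟨j, j', hj, by simp [rho]⟩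
  rw [rhoM, hset, csSup_singleton]

theorem rhoM_of_kronecker_construction (n₁ m₁ n₂ m₂ : ℕ)
    (hm₁ : 2 ≤ m₁) (hm₂ : 2 ≤ m₂)
    (A : Matrix (Fin n₁) (Fin m₁) ℝ) (hA1 : ∀ i j, A i j = 1 ∨ A i j = -1)
    (hA : Aᵀ * A = (n₁ : ℝ) • (1 : Matrix (Fin m₁) (Fin m₁) ℝ))
    (D : Matrix (Fin n₂) (Fin m₂) ℝ) (hD1 : ∀ i j, D i j = 1 ∨ D i j = -1)
    (hD : Dᵀ * D = (n₂ : ℝ) • (1 : Matrix (Fin m₂) (Fin m₂) ℝ))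
    (B : Matrix (Fin n₂) (Fin m₂) ℝ) (hB : IsLH n₂ B)
    (C : Matrix (Fin n₁) (Fin m₁) ℝ) (hC : IsLH n₁ C)
    (horth : Aᵀ * C = 0 ∨ Bᵀ * D = 0)
    (L : Matrix (Fin n₁ × Fin n₂) (Fin m₁ × Fin m₂) ℝ)
    (hL : L = A ⊗ₖ B + (n₂ : ℝ) • (C ⊗ₖ D))
    (hLlh : IsLH (n₁ * n₂) L) :
    rhoM L = max ((((n₂ : ℝ) ^ 2 - 1) / (((n₁ * n₂ : ℕ) : ℝ) ^ 2 - 1)) * rhoM B)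
      (((n₂ : ℝ) ^ 2 * ((n₁ : ℝ) ^ 2 - 1) / (((n₁ * n₂ : ℕ) : ℝ) ^ 2 - 1)) * rhoM C) := by
  -- distinct column indices
  obtain ⟨a, a', haa⟩ : ∃ x y : Fin m₁, x ≠ y :=
    ⟨⟨0, by omega⟩, ⟨1, by omega⟩, by simp [Fin.ext_iff]⟩
  obtain ⟨b, b', hbb⟩ : ∃ x y : Fin m₂, x ≠ y :=
    ⟨⟨0, by omega⟩, ⟨1, by omega⟩, by simp [Fin.ext_iff]⟩
  have bddB := rhoM_bddAbove B
  have bddC := rhoM_bddAbove C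
  have bddL := rhoM_bddAbove L
  have habsB : ∀ j j' : Fin m₂, j ≠ j' → |rho B j j'| ≤ rhoM B :=
    fun j j' h => le_csSup bddB ⟨j, j', h, rfl⟩
  have habsC : ∀ j j' : Fin m₁, j ≠ j' → |rho C j j'| ≤ rhoM C :=
    fun j j' h => le_csSup bddC ⟨j, j', h, rfl⟩
  have hBnn : 0 ≤ rhoM B := le_trans (abs_nonneg _) (habsB b b' hbb)
  have hCnn : 0 ≤ rhoM C := le_trans (abs_nonneg _) (habsC a a' haa)
  -- degenerate cases
  rcases Nat.eq_zero_or_pos n₁ with h₁0 | h₁pos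
  · subst h₁0
    rw [rhoM_eq_zero_of_isEmpty L ⟨(a,b), (a',b), fun h => haa (congrArg Prod.fst h)⟩,
      rhoM_eq_zero_of_isEmpty C ⟨a, a', haa⟩, mul_zero]
    have hden : (((0 * n₂ : ℕ) : ℝ))^2 - 1 = -1 := by norm_num
    rcases Nat.eq_zero_or_pos n₂ with h₂0 | h₂pos
    · subst h₂0
      rw [rhoM_eq_zero_of_isEmpty B ⟨b, b', hbb⟩, mul_zero]
      simp
    · have hw : (((n₂ : ℝ) ^ 2 - 1) / (((0 * n₂ : ℕ) : ℝ) ^ 2 - 1)) ≤ 0 := by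
        rw [hden]
        apply div_nonpos_of_nonneg_of_nonpos
        · have : (1:ℝ) ≤ (n₂:ℝ) := by exact_mod_cast h₂pos
          nlinarith
        · norm_num
      exact (max_eq_right (mul_nonpos_of_nonpos_of_nonneg hw hBnn)).symm
  rcases Nat.eq_zero_or_pos n₂ with h₂0 | h₂pos
  · subst h₂0
    rw [rhoM_eq_zero_of_isEmpty L ⟨(a,b), (a',b), fun h => haa (congrArg Prod.fst h)⟩,
      rhoM_eq_zero_of_isEmpty B ⟨b, b', hbb⟩, mul_zero]
    norm_num
  -- rule out n₁ = 1 and n₂ = 1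
  have h₁2 : 2 ≤ n₁ := by
    by_contra hcon
    have hn1 : n₁ = 1 := by omega
    subst hn1
    have e : A 0 a * A 0 a' = 0 := by
      have h0 := congrFun (congrFun hA a) a'
      simpa [Matrix.mul_apply, Matrix.one_apply, haa] using h0
    rcases hA1 0 a with h | h <;> rcases hA1 0 a' with h' | h' <;>
      rw [h, h'] at e <;> norm_num at e
  have h₂2 : 2 ≤ n₂ := by
    by_contra hcon
    have hn1 : n₂ = 1 := by omega
    subst hn1
    have e : D 0 b * D 0 b' = 0 := by
      have h0 := congrFun (congrFun hD b) b'
      simpa [Matrix.mul_apply, Matrix.one_apply, hbb] using h0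
    rcases hD1 0 b with h | h <;> rcases hD1 0 b' with h' | h' <;>
      rw [h, h'] at e <;> norm_num at e
  -- main case
  push_cast
  have hr₁ : (2:ℝ) ≤ (n₁:ℝ) := by exact_mod_cast h₁2
  have hr₂ : (2:ℝ) ≤ (n₂:ℝ) := by exact_mod_cast h₂2
  set w₃ : ℝ := ((n₂ : ℝ) ^ 2 - 1) / (((n₁:ℝ) * (n₂:ℝ)) ^ 2 - 1) with hw₃def
  set w₄ : ℝ := (n₂ : ℝ) ^ 2 * ((n₁ : ℝ) ^ 2 - 1) / (((n₁:ℝ) * (n₂:ℝ)) ^ 2 - 1) with hw₄def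
  have h4 : (4:ℝ) ≤ (n₁:ℝ)*(n₂:ℝ) := by nlinarith
  have hNsq : (0:ℝ) < ((n₁:ℝ) * (n₂:ℝ))^2 - 1 := by nlinarith
  have hn₁0 : (n₁:ℝ) ≠ 0 := by positivity
  have hn₂0 : (n₂:ℝ) ≠ 0 := by positivity
  have hq₂ : (0:ℝ) < (n₂:ℝ)^2 - 1 := by nlinarith
  have hq₁ : (0:ℝ) < (n₁:ℝ)^2 - 1 := by nlinarith
  have hw₃ : 0 < w₃ := by rw [hw₃def]; exact div_pos hq₂ hNsq
  have hw₄ : 0 < w₄ := by rw [hw₄def]; exact div_pos (mul_pos (by positivity) hq₁) hNsq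
  have hLs : ∀ j, (∑ i, L i j ^ 2) = ((n₁:ℝ)*(n₂:ℝ)) * (((n₁:ℝ)*(n₂:ℝ))^2 - 1) / 12 := by
    intro j; have h := hLlh.sum_sq j; push_cast at h; exact h
  have hBs : ∀ j, (∑ i, B i j ^ 2) = (n₂:ℝ) * ((n₂:ℝ)^2 - 1) / 12 := fun j => hB.sum_sq j
  have hCs : ∀ j, (∑ i, C i j ^ 2) = (n₁:ℝ) * ((n₁:ℝ)^2 - 1) / 12 := fun j => hC.sum_sq j
  have hspos : (0:ℝ) < ((n₁:ℝ)*(n₂:ℝ)) * (((n₁:ℝ)*(n₂:ℝ))^2 - 1) / 12 :=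
    div_pos (mul_pos (by linarith) hNsq) (by norm_num)
  have hs₂pos : (0:ℝ) < (n₂:ℝ) * ((n₂:ℝ)^2 - 1) / 12 :=
    div_pos (mul_pos (by linarith) hq₂) (by norm_num)
  have hs₁pos : (0:ℝ) < (n₁:ℝ) * ((n₁:ℝ)^2 - 1) / 12 :=
    div_pos (mul_pos (by linarith) hq₁) (by norm_num)
  have hrhoL : ∀ j j' : Fin m₁ × Fin m₂, rho L j j'
      = (∑ i, L i j * L i j') / (((n₁:ℝ)*(n₂:ℝ)) * (((n₁:ℝ)*(n₂:ℝ))^2 - 1) / 12) := by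
    intro j j'; rw [rho, hLs j, hLs j', Real.sqrt_mul_self hspos.le]
  have hrhoB : ∀ j j' : Fin m₂, rho B j j'
      = (∑ i, B i j * B i j') / ((n₂:ℝ) * ((n₂:ℝ)^2 - 1) / 12) := by
    intro j j'; rw [rho, hBs j, hBs j', Real.sqrt_mul_self hs₂pos.le]
  have hrhoC : ∀ j j' : Fin m₁, rho C j j'
      = (∑ i, C i j * C i j') / ((n₁:ℝ) * ((n₁:ℝ)^2 - 1) / 12) := by
    intro j j'; rw [rho, hCs j, hCs j', Real.sqrt_mul_self hs₁pos.le]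
  have key : Lᵀ * L = (n₁:ℝ) • ((1 : Matrix (Fin m₁) (Fin m₁) ℝ) ⊗ₖ (Bᵀ * B))
      + ((n₂:ℝ)^3) • ((Cᵀ * C) ⊗ₖ (1 : Matrix (Fin m₂) (Fin m₂) ℝ)) := by
    rw [hL]
    have hT : ∀ (X : Matrix (Fin n₁) (Fin m₁) ℝ) (Y : Matrix (Fin n₂) (Fin m₂) ℝ),
        (X ⊗ₖ Y)ᵀ = Xᵀ ⊗ₖ Yᵀ := fun X Y => (kroneckerMap_transpose _ _ _).symm
    rw [transpose_add, transpose_smul, Matrix.add_mul, Matrix.mul_add, Matrix.mul_add, hT, hT,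
      Matrix.smul_mul, Matrix.mul_smul, Matrix.smul_mul, Matrix.mul_smul,
      ← mul_kronecker_mul, ← mul_kronecker_mul, ← mul_kronecker_mul, ← mul_kronecker_mul,
      hA, hD]
    have hCA : Cᵀ * A = (Aᵀ * C)ᵀ := by rw [transpose_mul, transpose_transpose]
    have hDB : Dᵀ * B = (Bᵀ * D)ᵀ := by rw [transpose_mul, transpose_transpose]
    have hcross : (Aᵀ * C) ⊗ₖ (Bᵀ * D) = 0 ∧ (Cᵀ * A) ⊗ₖ (Dᵀ * B) = 0 := by
      rcases horth with h | h
      · exact ⟨by rw [h, zero_kronecker], by rw [hCA, h, transpose_zero, zero_kronecker]⟩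
      · exact ⟨by rw [h, kronecker_zero], by rw [hDB, h, transpose_zero, kronecker_zero]⟩
    simp only [hcross.1, hcross.2, smul_zero, add_zero, zero_add, smul_kronecker,
      kronecker_smul, smul_smul]
    rw [show (n₂:ℝ) * ((n₂:ℝ) * (n₂:ℝ)) = (n₂:ℝ)^3 by ring]
  have hnum : ∀ (j₁ j₁' : Fin m₁) (j₂ j₂' : Fin m₂),
      (∑ i, L i (j₁,j₂) * L i (j₁',j₂'))
        = (n₁:ℝ) * ((if j₁ = j₁' then (1:ℝ) else 0) * ∑ i, B i j₂ * B i j₂')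
          + (n₂:ℝ)^3 * ((∑ i, C i j₁ * C i j₁') * (if j₂ = j₂' then (1:ℝ) else 0)) := by
    intro j₁ j₁' j₂ j₂'
    have h1 : (∑ i, L i (j₁,j₂) * L i (j₁',j₂')) = (Lᵀ * L) (j₁,j₂) (j₁',j₂') := by
      simp [Matrix.mul_apply]
    rw [h1, key]
    simp only [Matrix.add_apply, Matrix.smul_apply, kroneckerMap_apply, Matrix.one_apply,
      Matrix.mul_apply, Matrix.transpose_apply, smul_eq_mul]
  have case1 : ∀ (j₁ : Fin m₁) (j₂ j₂' : Fin m₂), j₂ ≠ j₂' →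
      |rho L (j₁,j₂) (j₁,j₂')| = w₃ * |rho B j₂ j₂'| := by
    intro j₁ j₂ j₂' h
    rw [hrhoL, hnum, if_pos rfl, if_neg h, hrhoB, mul_zero, mul_zero, add_zero, one_mul]
    have hEq : ((n₁:ℝ) * ∑ i, B i j₂ * B i j₂')
          / (((n₁:ℝ)*(n₂:ℝ)) * (((n₁:ℝ)*(n₂:ℝ))^2 - 1) / 12)
        = w₃ * ((∑ i, B i j₂ * B i j₂') / ((n₂:ℝ) * ((n₂:ℝ)^2 - 1) / 12)) := by
      rw [hw₃def]
      field_simp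
    rw [hEq, abs_mul, abs_of_nonneg hw₃.le]
  have case2 : ∀ (j₁ j₁' : Fin m₁) (j₂ : Fin m₂), j₁ ≠ j₁' →
      |rho L (j₁,j₂) (j₁',j₂)| = w₄ * |rho C j₁ j₁'| := by
    intro j₁ j₁' j₂ h
    rw [hrhoL, hnum, if_neg h, if_pos rfl, hrhoC, zero_mul, mul_zero, zero_add, mul_one]
    have hEq : ((n₂:ℝ)^3 * ∑ i, C i j₁ * C i j₁')
          / (((n₁:ℝ)*(n₂:ℝ)) * (((n₁:ℝ)*(n₂:ℝ))^2 - 1) / 12)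
        = w₄ * ((∑ i, C i j₁ * C i j₁') / ((n₁:ℝ) * ((n₁:ℝ)^2 - 1) / 12)) := by
      rw [hw₄def]
      field_simp
    rw [hEq, abs_mul, abs_of_nonneg hw₄.le]
  have case3 : ∀ (j₁ j₁' : Fin m₁) (j₂ j₂' : Fin m₂), j₁ ≠ j₁' → j₂ ≠ j₂' →
      rho L (j₁,j₂) (j₁',j₂') = 0 := by
    intro j₁ j₁' j₂ j₂' h1 h2
    rw [hrhoL, hnum, if_neg h1, if_neg h2]
    simp
  have hrhoML : rhoM L
      = sSup {r : ℝ | ∃ j j' : Fin m₁ × Fin m₂, j ≠ j' ∧ r = |rho L j j'|} := rfl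
  have hrhoMB : rhoM B
      = sSup {r : ℝ | ∃ j j' : Fin m₂, j ≠ j' ∧ r = |rho B j j'|} := rfl
  have hrhoMC : rhoM C
      = sSup {r : ℝ | ∃ j j' : Fin m₁, j ≠ j' ∧ r = |rho C j j'|} := rfl
  apply le_antisymm
  · rw [hrhoML]
    refine csSup_le ⟨_, (a,b), (a',b), fun h => haa (congrArg Prod.fst h), rfl⟩ ?_
    rintro r ⟨⟨j₁,j₂⟩, ⟨j₁',j₂'⟩, hne, rfl⟩
    by_cases h1 : j₁ = j₁'
    · subst h1
      have h2 : j₂ ≠ j₂' := fun h => hne (by rw [h])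
      rw [case1 j₁ j₂ j₂' h2]
      exact le_max_of_le_left (mul_le_mul_of_nonneg_left (habsB _ _ h2) hw₃.le)
    · by_cases h2 : j₂ = j₂'
      · subst h2
        rw [case2 j₁ j₁' j₂ h1]
        exact le_max_of_le_right (mul_le_mul_of_nonneg_left (habsC _ _ h1) hw₄.le)
      · rw [case3 j₁ j₁' j₂ j₂' h1 h2, abs_zero]
        exact le_max_of_le_left (mul_nonneg hw₃.le hBnn)
  · apply max_le
    · rw [show w₃ * rhoM B = rhoM B * w₃ from mul_comm _ _, ← le_div_iff₀ hw₃, hrhoMB]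
      refine csSup_le ⟨_, b, b', hbb, rfl⟩ ?_
      rintro r ⟨j, j', hj, rfl⟩
      rw [le_div_iff₀ hw₃, mul_comm, ← case1 a j j' hj]
      exact le_csSup bddL ⟨(a,j), (a,j'), fun h => hj (congrArg Prod.snd h), rfl⟩
    · rw [show w₄ * rhoM C = rhoM C * w₄ from mul_comm _ _, ← le_div_iff₀ hw₄, hrhoMC]
      refine csSup_le ⟨_, a, a', haa, rfl⟩ ?_
      rintro r ⟨j, j', hj, rfl⟩
      rw [le_div_iff₀ hw₄, mul_comm, ← case2 j j' b hj]
      exact le_csSup bddL ⟨(j,b), (j',b), fun h => hj (congrArg Prod.fst h), rfl⟩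
end
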